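/- Let d ≥ 1 and let V_1, …, V_n (n ≥ 2) be nonzero proper linear subspaces of ℝ^d with positive weights ω_1, …, ω_n, and set m := Σ_{j=1}^n ω_j·dim(V_j). Then max_{i≠j} ⟨P_{V_i}, P_{V_j}⟩ = (m²/d − Σ_{j=1}^n ω_j²·dim(V_j)) / (Σ_{i≠j} ω_i ω_j) holds if and only if {(V_j, ω_j)}_{j=1}^n is an equiangular tight fusion frame, i.e. ⟨P_{V_i}, P_{V_j}⟩ takes the same value for all i ≠ j and Σ_{j=1}^n ω_j P_{V_j} = (m/d)·Id. -/

import Mathlib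

open scoped BigOperators

/-- The orthogonal projection onto a subspace `V` of `ℝ^d`, as a linear endomorphism. -/
noncomputable def proj {d : ℕ} (V : Submodule ℝ (EuclideanSpace ℝ (Fin d))) :
    EuclideanSpace ℝ (Fin d) →ₗ[ℝ] EuclideanSpace ℝ (Fin d) :=
  V.subtype ∘ₗ (V.orthogonalProjection).toLinearMap

/-- `⟨P_V, P_W⟩ = trace (P_V P_W)`. -/
noncomputable def trPP {d : ℕ} (V W : Submodule ℝ (EuclideanSpace ℝ (Fin d))) : ℝ :=
  LinearMap.trace ℝ _ (proj V ∘ₗ proj W)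

/-- With `n ≥ 2` elements, the set of off-diagonal pairs of indices is nonempty. -/
theorem offDiag_univ_nonempty {n : ℕ} (hn : 2 ≤ n) :
    (Finset.univ.offDiag (α := Fin n)).Nonempty := by
  rw [← Finset.coe_nonempty, Finset.coe_offDiag, Set.offDiag_nonempty]
  exact ⟨⟨0, by omega⟩, by simp, ⟨1, by omega⟩, by simp, by simp [Fin.ext_iff]⟩


lemma proj_isProj {d : ℕ} (V : Submodule ℝ (EuclideanSpace ℝ (Fin d))) :
    LinearMap.IsProj V (proj V) := by
  constructor
  · intro x; exact (V.orthogonalProjection x).2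
  · intro x hx
    exact congrArg Subtype.val (Submodule.orthogonalProjectionOnto_mem_subspace_eq_self (K := V) ⟨x, hx⟩)

lemma trace_proj {d : ℕ} (V : Submodule ℝ (EuclideanSpace ℝ (Fin d))) :
    LinearMap.trace ℝ _ (proj V) = (Module.finrank ℝ V : ℝ) :=
  (proj_isProj V).trace

lemma proj_idem {d : ℕ} (V : Submodule ℝ (EuclideanSpace ℝ (Fin d))) :
    proj V ∘ₗ proj V = proj V := by
  ext x
  simp [proj, Submodule.starProjection_eq_self_iff.mpr (V.starProjection_apply_mem x)]

lemma proj_symm {d : ℕ} (V : Submodule ℝ (EuclideanSpace ℝ (Fin d))) :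
    (proj V).IsSymmetric := by
  intro x y
  exact Submodule.inner_starProjection_left_eq_right V x y

lemma trace_comp_self {d : ℕ} {T : EuclideanSpace ℝ (Fin d) →ₗ[ℝ] EuclideanSpace ℝ (Fin d)}
    (hT : T.IsSymmetric) :
    0 ≤ LinearMap.trace ℝ _ (T ∘ₗ T) ∧ (LinearMap.trace ℝ _ (T ∘ₗ T) = 0 ↔ T = 0) := by
  classical
  set b : Module.Basis (Fin d) ℝ (EuclideanSpace ℝ (Fin d)) := PiLp.basisFun 2 ℝ (Fin d) with hb
  set A : Matrix (Fin d) (Fin d) ℝ := LinearMap.toMatrix b b T with hA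
  have hTA : A.toEuclideanLin = T := by
    rw [Matrix.toEuclideanLin_eq_toLin, hA, hb, Matrix.toLin_toMatrix]
  have hherm : A.IsHermitian := by
    rw [Matrix.isHermitian_iff_isSymmetric, hTA]; exact hT
  have hsymm : ∀ i j, A j i = A i j := by
    intro i j
    conv_lhs => rw [← hherm.eq]
    simp [Matrix.conjTranspose_apply]
  have htr : LinearMap.trace ℝ _ (T ∘ₗ T) = ∑ i, ∑ j, A i j ^ 2 := by
    rw [LinearMap.trace_eq_matrix_trace ℝ b, LinearMap.toMatrix_comp b b b, ← hA]
    simp only [Matrix.trace, Matrix.diag, Matrix.mul_apply]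
    exact Finset.sum_congr rfl fun i _ => Finset.sum_congr rfl fun j _ => by
      rw [hsymm i j, sq]
  constructor
  · rw [htr]
    exact Finset.sum_nonneg fun i _ => Finset.sum_nonneg fun j _ => sq_nonneg _
  · rw [htr]
    constructor
    · intro h
      have hA0 : A = 0 := by
        ext i j
        have h1 := (Finset.sum_eq_zero_iff_of_nonneg
          (fun i _ => Finset.sum_nonneg fun j _ => sq_nonneg (A i j))).mp h i (Finset.mem_univ i)
        have h2 := (Finset.sum_eq_zero_iff_of_nonneg
          (fun j _ => sq_nonneg (A i j))).mp h1 j (Finset.mem_univ j)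
        simpa [pow_eq_zero_iff] using h2
      have := (LinearMap.toMatrix b b).map_eq_zero_iff.mp hA0
      exact this
    · intro h; simp [hA, h]

set_option maxHeartbeats 1000000 in
theorem stmt4 {d n : ℕ} (hd : 1 ≤ d) (hn : 2 ≤ n)
    (V : Fin n → Submodule ℝ (EuclideanSpace ℝ (Fin d)))
    (hVbot : ∀ j, V j ≠ ⊥) (hVtop : ∀ j, V j ≠ ⊤)
    (ω : Fin n → ℝ) (hω : ∀ j, 0 < ω j)
    (m : ℝ) (hm : m = ∑ j, ω j * (Module.finrank ℝ (V j) : ℝ)) :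
    Finset.sup' (Finset.univ.offDiag (α := Fin n)) (offDiag_univ_nonempty hn)
        (fun ij => trPP (V ij.1) (V ij.2)) =
      (m ^ 2 / d - ∑ j, ω j ^ 2 * (Module.finrank ℝ (V j) : ℝ)) /
        (∑ ij ∈ Finset.univ.offDiag (α := Fin n), ω ij.1 * ω ij.2)
    ↔
    ((∃ c : ℝ, ∀ i j, i ≠ j → trPP (V i) (V j) = c) ∧
      ∑ j, ω j • proj (V j) =
        (m / d) • (LinearMap.id : EuclideanSpace ℝ (Fin d) →ₗ[ℝ] EuclideanSpace ℝ (Fin d))) := by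
  have hd0 : (0 : ℝ) < (d : ℝ) := by exact_mod_cast hd
  set S : EuclideanSpace ℝ (Fin d) →ₗ[ℝ] EuclideanSpace ℝ (Fin d) :=
    ∑ j, ω j • proj (V j) with hS
  set W : ℝ := ∑ ij ∈ Finset.univ.offDiag (α := Fin n), ω ij.1 * ω ij.2 with hW
  set N : ℝ := m ^ 2 / d - ∑ j, ω j ^ 2 * (Module.finrank ℝ (V j) : ℝ) with hN
  have hWpos : 0 < W := by
    apply Finset.sum_pos
    · intro ij _; exact mul_pos (hω _) (hω _)
    · exact offDiag_univ_nonempty hn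
  -- trace S = m
  have htrS : LinearMap.trace ℝ _ S = m := by
    rw [hS, map_sum, hm]
    exact Finset.sum_congr rfl fun j _ => by
      rw [map_smul, trace_proj]; rfl
  -- expansion of trace (S ∘ S)
  have hcomp : S ∘ₗ S =
      ∑ p ∈ Finset.univ ×ˢ Finset.univ,
        (ω p.1 * ω p.2) • (proj (V p.1) ∘ₗ proj (V p.2)) := by
    rw [Finset.sum_product]
    show S * S = _
    rw [hS, Finset.sum_mul_sum]
    exact Finset.sum_congr rfl fun i _ => Finset.sum_congr rfl fun j _ => by
      rw [smul_mul_assoc, mul_smul_comm, smul_smul]; rfl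
  have hSS : LinearMap.trace ℝ _ (S ∘ₗ S) =
      (∑ j, ω j ^ 2 * (Module.finrank ℝ (V j) : ℝ)) +
      ∑ ij ∈ Finset.univ.offDiag (α := Fin n),
        ω ij.1 * ω ij.2 * trPP (V ij.1) (V ij.2) := by
    rw [hcomp, map_sum, ← Finset.diag_union_offDiag,
      Finset.sum_union (Finset.disjoint_diag_offDiag _), Finset.sum_diag]
    congr 1
    · exact Finset.sum_congr rfl fun j _ => by
        rw [map_smul, proj_idem, trace_proj, smul_eq_mul, sq]
    · exact Finset.sum_congr rfl fun ij _ => by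
        rw [map_smul]; rfl
  -- symmetry
  have hSsymm : S.IsSymmetric := by
    intro x y
    simp only [hS, LinearMap.sum_apply, LinearMap.smul_apply, sum_inner, inner_sum,
      real_inner_smul_left, real_inner_smul_right]
    exact Finset.sum_congr rfl fun j _ => by rw [proj_symm (V j) x y]
  set T : EuclideanSpace ℝ (Fin d) →ₗ[ℝ] EuclideanSpace ℝ (Fin d) :=
    S - (m / d) • LinearMap.id with hT
  have hTsymm : T.IsSymmetric :=
    hSsymm.sub (LinearMap.IsSymmetric.id.smul (by simp))
  have hTT : LinearMap.trace ℝ _ (T ∘ₗ T) = LinearMap.trace ℝ _ (S ∘ₗ S) - m ^ 2 / d := by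
    have hexp : T ∘ₗ T = S ∘ₗ S - (m / d) • S - (m / d) • S
        + ((m / d) * (m / d)) • (LinearMap.id (R := ℝ) (M := EuclideanSpace ℝ (Fin d))) := by
      show T * T = S * S - (m / d) • S - (m / d) • S + ((m / d) * (m / d)) • 1
      rw [hT, Module.End.one_eq_id]
      have : S - (m / d) • LinearMap.id = S - (m / d) • 1 := rfl
      rw [this, sub_mul, mul_sub, mul_sub]
      simp only [← Module.End.one_eq_id, smul_mul_assoc, mul_smul_comm, one_mul, mul_one,
        smul_smul]
      abel
    rw [hexp]
    simp only [← Module.End.one_eq_id, map_add, map_sub, map_smul, smul_eq_mul, htrS,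
      LinearMap.trace_one, finrank_euclideanSpace_fin]
    field_simp
    ring
  have hTpos := trace_comp_self hTsymm
  have heqiff : LinearMap.trace ℝ _ (S ∘ₗ S) = m ^ 2 / d ↔
      S = (m / d) • LinearMap.id := by
    rw [← sub_eq_zero (b := m ^ 2 / d), ← hTT, hTpos.2, hT, sub_eq_zero]
  constructor
  · intro h
    set Mx : ℝ := Finset.sup' (Finset.univ.offDiag (α := Fin n)) (offDiag_univ_nonempty hn)
        (fun ij => trPP (V ij.1) (V ij.2)) with hMx
    have hMxW : Mx * W = N := by
      rw [h, div_mul_cancel₀ _ hWpos.ne']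
    have hle : ∀ ij ∈ Finset.univ.offDiag (α := Fin n),
        trPP (V ij.1) (V ij.2) ≤ Mx := fun ij hij => by
      rw [hMx]
      exact Finset.le_sup' (s := Finset.univ.offDiag (α := Fin n)) (fun ij => trPP (V ij.1) (V ij.2)) hij
    have h1 : ∑ ij ∈ Finset.univ.offDiag (α := Fin n),
        ω ij.1 * ω ij.2 * trPP (V ij.1) (V ij.2) ≤ Mx * W := by
      rw [hW, Finset.mul_sum]
      exact Finset.sum_le_sum fun ij hij => by
        rw [mul_comm Mx]
        exact mul_le_mul_of_nonneg_left (hle ij hij)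
          (le_of_lt (mul_pos (hω _) (hω _)))
    have h2 : N ≤ ∑ ij ∈ Finset.univ.offDiag (α := Fin n),
        ω ij.1 * ω ij.2 * trPP (V ij.1) (V ij.2) := by
      have := hTpos.1
      rw [hTT] at this
      rw [hN]
      linarith [hSS]
    have hsum_eq : ∑ ij ∈ Finset.univ.offDiag (α := Fin n),
        ω ij.1 * ω ij.2 * trPP (V ij.1) (V ij.2) = N :=
      le_antisymm (hMxW ▸ h1) h2
    have htr_eq : LinearMap.trace ℝ _ (S ∘ₗ S) = m ^ 2 / d := by
      rw [hSS, hsum_eq, hN]; ring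
    refine ⟨⟨Mx, ?_⟩, hS.symm.trans (heqiff.mp htr_eq)⟩
    -- all off-diagonal trPP equal Mx
    have hzero : ∑ ij ∈ Finset.univ.offDiag (α := Fin n),
        ω ij.1 * ω ij.2 * (Mx - trPP (V ij.1) (V ij.2)) = 0 := by
      simp only [mul_sub]
      rw [Finset.sum_sub_distrib, hsum_eq, ← hMxW, hW, Finset.mul_sum, sub_eq_zero]
      exact Finset.sum_congr rfl fun ij _ => by ring
    have hterm : ∀ ij ∈ Finset.univ.offDiag (α := Fin n),
        ω ij.1 * ω ij.2 * (Mx - trPP (V ij.1) (V ij.2)) = 0 := by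
      refine (Finset.sum_eq_zero_iff_of_nonneg fun ij hij => ?_).mp hzero
      exact mul_nonneg (le_of_lt (mul_pos (hω _) (hω _))) (sub_nonneg.mpr (hle ij hij))
    intro i j hij
    have hmem : (i, j) ∈ Finset.univ.offDiag (α := Fin n) :=
      Finset.mem_offDiag.mpr ⟨Finset.mem_univ _, Finset.mem_univ _, hij⟩
    have := hterm (i, j) hmem
    have hne : ω i * ω j ≠ 0 := (mul_pos (hω i) (hω j)).ne'
    have : Mx - trPP (V i) (V j) = 0 := by
      rcases mul_eq_zero.mp this with h' | h'
      · exact absurd h' hne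
      · exact h'
    linarith [this]
  · rintro ⟨⟨c, hc⟩, hSid⟩
    have hoff : ∀ ij ∈ Finset.univ.offDiag (α := Fin n),
        trPP (V ij.1) (V ij.2) = c := fun ij hij =>
      hc ij.1 ij.2 (Finset.mem_offDiag.mp hij).2.2
    have hSsq : LinearMap.trace ℝ _ (S ∘ₗ S) = m ^ 2 / d := by
      have hSid' : S = (m / d) • LinearMap.id := hS.trans hSid
      rw [hSid']
      have : ((m / d) • (LinearMap.id : EuclideanSpace ℝ (Fin d) →ₗ[ℝ] _)) ∘ₗ
          ((m / d) • LinearMap.id) = ((m / d) * (m / d)) • (LinearMap.id (R := ℝ)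
            (M := EuclideanSpace ℝ (Fin d))) := by
        rw [LinearMap.comp_smul, LinearMap.smul_comp, LinearMap.id_comp, smul_smul]
      rw [this, map_smul, LinearMap.trace_id, finrank_euclideanSpace_fin, smul_eq_mul]
      field_simp
    have hcW : c * W = N := by
      have := hSS
      rw [hSsq] at this
      have hsum : ∑ ij ∈ Finset.univ.offDiag (α := Fin n),
          ω ij.1 * ω ij.2 * trPP (V ij.1) (V ij.2) = c * W := by
        rw [hW, Finset.mul_sum]
        exact Finset.sum_congr rfl fun ij hij => by rw [hoff ij hij]; ring
      rw [hsum] at this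
      rw [hN]
      linarith
    have hsup : Finset.sup' (Finset.univ.offDiag (α := Fin n)) (offDiag_univ_nonempty hn)
        (fun ij => trPP (V ij.1) (V ij.2)) = c := by
      exact (Finset.sup'_congr (offDiag_univ_nonempty hn) rfl hoff).trans
        (Finset.sup'_const _ c)
    rw [hsup, eq_div_iff hWpos.ne']
    exact hcW
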